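/- arXiv:2504.00833 — 3 statements merged into one kernel-verified Lean document; each statement's English description precedes it below -/
import Mathlib

section
/- Let A be a real symmetric positive semidefinite n×n matrix with orthonormal eigenbasis v₁, ..., vₙ and corresponding eigenvalues λ₁ > λ₂ ≥ λ₃ ≥ ⋯ ≥ λₙ ≥ 0 with λ₁ > 0. Let x₀ ∈ ℝ^n be a unit vector with c := ⟨v₁, x₀⟩ ≠ 0. Then for every natural number k, A^k x₀ ≠ 0 and 1 − ⟨v₁, A^k x₀⟩² / ‖A^k x₀‖² ≤ (λ₂/λ₁)^{2k} · (1 − c²)/c². -/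
open Matrix Finset

lemma toEuclideanLin_mul_apply' {n : ℕ} (M N : Matrix (Fin n) (Fin n) ℝ)
    (x : EuclideanSpace ℝ (Fin n)) :
    Matrix.toEuclideanLin (M * N) x = Matrix.toEuclideanLin M (Matrix.toEuclideanLin N x) := by
  simp [Matrix.toEuclideanLin_apply, ← Matrix.mulVec_mulVec]

/-- convergence bound for the power method. -/
theorem power_method_bound
    (n : ℕ) [NeZero n] (hn : 2 ≤ n)
    (A : Matrix (Fin n) (Fin n) ℝ) (hA : A.PosSemidef)
    (v : Fin n → EuclideanSpace ℝ (Fin n)) (hv : Orthonormal ℝ v)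
    (lam : Fin n → ℝ)
    (heig : ∀ i, Matrix.toEuclideanLin A (v i) = lam i • v i)
    (hdec : ∀ i j : Fin n, i ≤ j → lam j ≤ lam i)
    (hgap : lam 1 < lam 0)
    (hnn : ∀ i, 0 ≤ lam i)
    (hpos : 0 < lam 0)
    (x₀ : EuclideanSpace ℝ (Fin n)) (hx₀ : ‖x₀‖ = 1)
    (c : ℝ) (hc : c = (inner ℝ (v 0) x₀ : ℝ)) (hc0 : c ≠ 0) :
    ∀ k : ℕ,
      Matrix.toEuclideanLin (A ^ k) x₀ ≠ 0 ∧
      1 - (inner ℝ (v 0) (Matrix.toEuclideanLin (A ^ k) x₀) : ℝ) ^ 2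
          / ‖Matrix.toEuclideanLin (A ^ k) x₀‖ ^ 2
        ≤ (lam 1 / lam 0) ^ (2 * k) * ((1 - c ^ 2) / c ^ 2) := by
  -- eigenvector powers
  have hpow : ∀ (k : ℕ) (i : Fin n),
      Matrix.toEuclideanLin (A ^ k) (v i) = (lam i ^ k) • v i := by
    intro k i
    induction k with
    | zero => simp [Matrix.toEuclideanLin_apply]
    | succ k ih =>
        rw [pow_succ, toEuclideanLin_mul_apply', heig, _root_.map_smul, ih, smul_smul, pow_succ]
        ring_nf
  -- orthonormal basis
  have hcard : Fintype.card (Fin n) = Module.finrank ℝ (EuclideanSpace ℝ (Fin n)) := by simp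
  let b : Module.Basis (Fin n) ℝ (EuclideanSpace ℝ (Fin n)) := basisOfOrthonormalOfCardEqFinrank hv hcard
  have hb : ⇑b = v := coe_basisOfOrthonormalOfCardEqFinrank hv hcard
  let B : OrthonormalBasis (Fin n) ℝ (EuclideanSpace ℝ (Fin n)) :=
    b.toOrthonormalBasis (by rwa [hb])
  have hB : ⇑B = v := by rw [Module.Basis.coe_toOrthonormalBasis, hb]
  -- coefficients
  set cf : Fin n → ℝ := fun i => (inner ℝ (v i) x₀ : ℝ) with hcf
  have hx : ∑ i, cf i • v i = x₀ := by
    have := B.sum_repr' x₀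
    simpa [hB] using this
  have hsum1 : ∑ i, cf i ^ 2 = 1 := by
    have h1 : (inner ℝ x₀ x₀ : ℝ) = ∑ i, cf i * cf i := by
      conv_lhs => rw [← hx]
      rw [hv.inner_sum]
      simp
    have h2 : (inner ℝ x₀ x₀ : ℝ) = 1 := by
      rw [real_inner_self_eq_norm_sq, hx₀]; norm_num
    rw [h2] at h1
    simp_rw [← sq] at h1
    exact h1.symm
  intro k
  set y : EuclideanSpace ℝ (Fin n) := Matrix.toEuclideanLin (A ^ k) x₀ with hy
  have hyexp : y = ∑ i, (lam i ^ k * cf i) • v i := by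
    rw [hy, ← hx, map_sum]
    congr 1; ext i
    rw [_root_.map_smul, hpow, smul_smul, mul_comm]
  have hinner : ∀ i, (inner ℝ (v i) y : ℝ) = lam i ^ k * cf i := by
    intro i
    rw [hyexp, hv.inner_right_fintype]
  have hnorm : ‖y‖ ^ 2 = ∑ i, (lam i ^ k * cf i) ^ 2 := by
    rw [← real_inner_self_eq_norm_sq]
    conv_lhs => rw [hyexp]
    rw [hv.inner_sum]
    simp [sq]
  set S : ℝ := ∑ i, (lam i ^ k * cf i) ^ 2 with hS
  have hc0f : cf 0 = c := hc.symm
  have ha0 : (lam 0 ^ k * cf 0) ^ 2 = lam 0 ^ (2 * k) * c ^ 2 := by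
    rw [hc0f, mul_pow, ← pow_mul, mul_comm k 2]
  have ha0pos : 0 < lam 0 ^ (2 * k) * c ^ 2 := by positivity
  have hSle : lam 0 ^ (2 * k) * c ^ 2 ≤ S := by
    rw [← ha0]
    exact Finset.single_le_sum (f := fun i => (lam i ^ k * cf i) ^ 2) (fun i _ => sq_nonneg _) (Finset.mem_univ (0 : Fin n))
  have hSpos : 0 < S := lt_of_lt_of_le ha0pos hSle
  have hynz : y ≠ 0 := by
    intro h
    rw [h] at hnorm
    simp only [norm_zero] at hnorm
    rw [← hnorm] at hSpos
    simp at hSpos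
  refine ⟨hynz, ?_⟩
  rw [hinner 0, hnorm, ha0]
  -- rewrite LHS as sum over erase 0 divided by S
  have hrest : S - lam 0 ^ (2 * k) * c ^ 2 = ∑ i ∈ univ.erase 0, (lam i ^ k * cf i) ^ 2 := by
    rw [← ha0, hS, ← Finset.sum_erase_add _ _ (mem_univ 0)]
    ring
  have hone : (1 : Fin n).val = 1 := by
    have : 1 % n = 1 := Nat.mod_eq_of_lt (by omega)
    simp [Fin.val_one', this]
  have hle1 : ∀ i ∈ univ.erase (0 : Fin n), lam i ≤ lam 1 := by
    intro i hi
    apply hdec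
    rw [Fin.le_def, hone]
    have h0 : i ≠ 0 := Finset.ne_of_mem_erase hi
    have : i.val ≠ 0 := fun h => h0 (Fin.ext (by simp [h]))
    omega
  have h1c : 0 ≤ 1 - c ^ 2 := by
    have : cf 0 ^ 2 ≤ ∑ i, cf i ^ 2 :=
      Finset.single_le_sum (f := fun i => cf i ^ 2) (fun i _ => sq_nonneg _)
        (Finset.mem_univ (0 : Fin n))
    rw [hsum1, hc0f] at this
    linarith
  have hcrest : ∑ i ∈ univ.erase (0 : Fin n), cf i ^ 2 = 1 - c ^ 2 := by
    rw [Finset.sum_erase_eq_sub (Finset.mem_univ (0 : Fin n)), hsum1, hc0f]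
  have hb1 : ∑ i ∈ univ.erase (0 : Fin n), (lam i ^ k * cf i) ^ 2
      ≤ lam 1 ^ (2 * k) * (1 - c ^ 2) := by
    rw [← hcrest, Finset.mul_sum]
    apply Finset.sum_le_sum
    intro i hi
    have h1 : lam i ^ (2 * k) ≤ lam 1 ^ (2 * k) :=
      pow_le_pow_left₀ (hnn i) (hle1 i hi) _
    have : (lam i ^ k * cf i) ^ 2 = lam i ^ (2 * k) * cf i ^ 2 := by
      rw [mul_pow, ← pow_mul, mul_comm k 2]
    rw [this]
    exact mul_le_mul_of_nonneg_right h1 (sq_nonneg _)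
  rw [one_sub_div hSpos.ne', hrest]
  have hRHS : (lam 1 / lam 0) ^ (2 * k) * ((1 - c ^ 2) / c ^ 2)
      = lam 1 ^ (2 * k) * (1 - c ^ 2) / (lam 0 ^ (2 * k) * c ^ 2) := by
    rw [div_pow, div_mul_div_comm]
  rw [hRHS]
  exact div_le_div₀ (mul_nonneg (pow_nonneg (hnn 1) _) h1c) hb1 ha0pos hSle
end

section
/- Let A be a real symmetric positive semidefinite n×n matrix with orthonormal eigenbasis v₁, ..., vₙ and corresponding eigenvalues λ₁ > λ₂ ≥ ⋯ ≥ λₙ ≥ 0 with λ₂ > 0. Let x₀ ∈ ℝ^n be a unit vector with c := ⟨v₁, x₀⟩ ≠ 0 and |c| < 1, and let ε ∈ (0,1). If the natural number k satisfies k ≥ log((1 − c²)/(c² ε²)) / (2 log(λ₁/λ₂)), then 1 − ⟨v₁, A^k x₀⟩² / ‖A^k x₀‖² ≤ ε². -/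
open Matrix

set_option maxHeartbeats 2000000 in
/-- iteration count for the power method. -/
theorem power_method_iterations
    (n : ℕ) [NeZero n] (hn : 2 ≤ n)
    (A : Matrix (Fin n) (Fin n) ℝ) (hA : A.PosSemidef)
    (v : Fin n → EuclideanSpace ℝ (Fin n)) (hv : Orthonormal ℝ v)
    (lam : Fin n → ℝ)
    (heig : ∀ i, Matrix.toEuclideanLin A (v i) = lam i • v i)
    (hdec : ∀ i j : Fin n, i ≤ j → lam j ≤ lam i)
    (hgap : lam 1 < lam 0)
    (hpos : 0 < lam 1)
    (x₀ : EuclideanSpace ℝ (Fin n)) (hx₀ : ‖x₀‖ = 1)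
    (c : ℝ) (hc : c = (inner ℝ (v 0) x₀ : ℝ)) (hc0 : c ≠ 0) (hc1 : |c| < 1)
    (ε : ℝ) (hε : ε ∈ Set.Ioo (0 : ℝ) 1)
    (k : ℕ)
    (hk : (k : ℝ) ≥ Real.log ((1 - c ^ 2) / (c ^ 2 * ε ^ 2))
        / (2 * Real.log (lam 0 / lam 1))) :
    1 - (inner ℝ (v 0) (Matrix.toEuclideanLin (A ^ k) x₀) : ℝ) ^ 2
        / ‖Matrix.toEuclideanLin (A ^ k) x₀‖ ^ 2 ≤ ε ^ 2 := by
  obtain ⟨hε0, hε1⟩ := hε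
  have hl0 : 0 < lam 0 := hpos.trans hgap
  have hmul : ∀ (M N : Matrix (Fin n) (Fin n) ℝ) (x : EuclideanSpace ℝ (Fin n)),
      Matrix.toEuclideanLin (M * N) x = Matrix.toEuclideanLin M (Matrix.toEuclideanLin N x) := by
    intro M N x
    rw [Matrix.toEuclideanLin_eq_toLin, Matrix.toLin_mul _ (PiLp.basisFun 2 ℝ (Fin n)) _]
    rfl
  have heigpow : ∀ (m : ℕ) (i : Fin n),
      Matrix.toEuclideanLin (A ^ m) (v i) = lam i ^ m • v i := by
    intro m i
    induction m with
    | zero => simp [Matrix.toEuclideanLin_eq_toLin]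
    | succ m ih =>
        rw [pow_succ, hmul, heig, LinearMap.map_smul, ih, pow_succ, smul_smul, mul_comm]
  have hsym : ∀ x y : EuclideanSpace ℝ (Fin n),
      (inner ℝ (Matrix.toEuclideanLin (A ^ k) x) y : ℝ)
        = inner ℝ x (Matrix.toEuclideanLin (A ^ k) y) :=
    (Matrix.isHermitian_iff_isSymmetric.mp (hA.1.pow k))
  set T := Matrix.toEuclideanLin (A ^ k) x₀ with hT
  have hinner : ∀ i : Fin n, (inner ℝ (v i) T : ℝ) = lam i ^ k * (inner ℝ (v i) x₀ : ℝ) := by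
    intro i
    rw [hT, ← hsym, heigpow, real_inner_smul_left]
  have hcard : Fintype.card (Fin n) = Module.finrank ℝ (EuclideanSpace ℝ (Fin n)) := by
    simp [finrank_euclideanSpace]
  have : Nonempty (Fin n) := ⟨0⟩
  let bb := basisOfOrthonormalOfCardEqFinrank hv hcard
  have hbb : ⇑bb = v := coe_basisOfOrthonormalOfCardEqFinrank hv hcard
  let b : OrthonormalBasis (Fin n) ℝ (EuclideanSpace ℝ (Fin n)) :=
    bb.toOrthonormalBasis (by rwa [hbb])
  have hb : ⇑b = v := (bb.coe_toOrthonormalBasis _).trans hbb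
  have parseval : ∀ x : EuclideanSpace ℝ (Fin n),
      ‖x‖ ^ 2 = ∑ i, (inner ℝ (v i) x : ℝ) ^ 2 := by
    intro x
    have h1 : (inner ℝ x x : ℝ) = ∑ i, (inner ℝ x (b i) : ℝ) * inner ℝ (b i) x :=
      (b.sum_inner_mul_inner x x).symm
    rw [real_inner_self_eq_norm_sq] at h1
    rw [h1]
    refine Finset.sum_congr rfl fun i _ => ?_
    rw [hb, real_inner_comm x (v i), sq]
  set C : Fin n → ℝ := fun i => (inner ℝ (v i) x₀ : ℝ) with hC
  have hc0' : C 0 = c := hc.symm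
  have hsumC : ∑ i, C i ^ 2 = 1 := by
    rw [← parseval, hx₀, one_pow]
  set S : ℝ := ∑ i, (lam i ^ k * C i) ^ 2 with hS
  have hnormT : ‖T‖ ^ 2 = S := by
    rw [parseval, hS]
    exact Finset.sum_congr rfl fun i _ => by rw [hinner i]
  have hc2 : 0 < c ^ 2 := by positivity
  have hc2lt : c ^ 2 < 1 := by nlinarith [sq_abs c, abs_nonneg c]
  have hP : 0 < (lam 0 ^ k * c) ^ 2 := by positivity
  have hterm0 : (lam 0 ^ k * C 0) ^ 2 = (lam 0 ^ k * c) ^ 2 := by rw [hc0']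
  have hSP : (lam 0 ^ k * c) ^ 2 ≤ S := by
    rw [hS, ← hterm0]
    exact Finset.single_le_sum (f := fun i => (lam i ^ k * C i) ^ 2)
      (fun i _ => by positivity) (Finset.mem_univ 0)
  have hSpos : 0 < S := lt_of_lt_of_le hP hSP
  have hlamnn : ∀ i, 0 ≤ lam i := by
    intro i
    have h1 : (inner ℝ (v i) (Matrix.toEuclideanLin A (v i)) : ℝ) = lam i := by
      rw [heig, real_inner_smul_right, real_inner_self_eq_norm_sq, hv.1 i]
      simp
    rw [← h1]
    have h2 := hA.re_dotProduct_nonneg ((WithLp.equiv 2 (Fin n → ℝ)) (v i))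
    simpa [EuclideanSpace.inner_eq_star_dotProduct, Matrix.toEuclideanLin_apply, dotProduct_comm] using h2
  have htail : S - (lam 0 ^ k * c) ^ 2 ≤ (lam 1 ^ k) ^ 2 * (1 - c ^ 2) := by
    have hsplit : S = (lam 0 ^ k * C 0) ^ 2
        + ∑ i ∈ Finset.univ.erase 0, (lam i ^ k * C i) ^ 2 := by
      rw [hS]
      exact (Finset.add_sum_erase _ (fun i => (lam i ^ k * C i) ^ 2) (Finset.mem_univ 0)).symm
    have h1 : ∑ i ∈ Finset.univ.erase 0, (lam i ^ k * C i) ^ 2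
        ≤ ∑ i ∈ Finset.univ.erase 0, (lam 1 ^ k) ^ 2 * C i ^ 2 := by
      refine Finset.sum_le_sum fun i hi => ?_
      have hi0 : i ≠ 0 := Finset.ne_of_mem_erase hi
      have h1i : (1 : Fin n) ≤ i := by
        rw [Fin.le_def]
        have e1 : (1 : Fin n).val = 1 := by
          rw [Fin.val_one']
          exact Nat.mod_eq_of_lt (by omega)
        rw [e1]
        have : i.val ≠ 0 := fun h => hi0 (Fin.ext h)
        omega
      have hle : lam i ≤ lam 1 := hdec 1 i h1i
      have hnn := hlamnn i
      have hpp : (lam i ^ k) ^ 2 ≤ (lam 1 ^ k) ^ 2 := by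
        apply pow_le_pow_left₀ (by positivity)
        exact pow_le_pow_left₀ hnn hle k
      calc (lam i ^ k * C i) ^ 2 = (lam i ^ k) ^ 2 * C i ^ 2 := by ring
        _ ≤ (lam 1 ^ k) ^ 2 * C i ^ 2 := by nlinarith [sq_nonneg (C i)]
    have h2 : ∑ i ∈ Finset.univ.erase 0, (lam 1 ^ k) ^ 2 * C i ^ 2
        = (lam 1 ^ k) ^ 2 * (1 - c ^ 2) := by
      rw [← Finset.mul_sum]
      congr 1
      have h3 := Finset.add_sum_erase Finset.univ (fun i => C i ^ 2) (Finset.mem_univ 0)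
      beta_reduce at h3
      rw [hsumC, hc0'] at h3
      linarith
    calc S - (lam 0 ^ k * c) ^ 2
        = ∑ i ∈ Finset.univ.erase 0, (lam i ^ k * C i) ^ 2 := by
          rw [hsplit, hc0']; ring
      _ ≤ ∑ i ∈ Finset.univ.erase 0, (lam 1 ^ k) ^ 2 * C i ^ 2 := h1
      _ = (lam 1 ^ k) ^ 2 * (1 - c ^ 2) := h2
  have hgeom : (1 - c ^ 2) * (lam 1 ^ k) ^ 2 ≤ ε ^ 2 * (c ^ 2 * (lam 0 ^ k) ^ 2) := by
    have hr : (1 : ℝ) < lam 0 / lam 1 := (one_lt_div hpos).mpr hgap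
    have hL : 0 < Real.log (lam 0 / lam 1) := Real.log_pos hr
    have hQpos : 0 < (1 - c ^ 2) / (c ^ 2 * ε ^ 2) := by
      apply div_pos (by linarith) (by positivity)
    have h2k : Real.log ((1 - c ^ 2) / (c ^ 2 * ε ^ 2)) ≤ 2 * k * Real.log (lam 0 / lam 1) := by
      have := (div_le_iff₀ (by linarith : (0:ℝ) < 2 * Real.log (lam 0 / lam 1))).mp hk
      linarith
    have hexp : (1 - c ^ 2) / (c ^ 2 * ε ^ 2) ≤ (lam 0 / lam 1) ^ (2 * k) := by
      calc (1 - c ^ 2) / (c ^ 2 * ε ^ 2)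
          = Real.exp (Real.log ((1 - c ^ 2) / (c ^ 2 * ε ^ 2))) := (Real.exp_log hQpos).symm
        _ ≤ Real.exp (2 * k * Real.log (lam 0 / lam 1)) := Real.exp_le_exp.mpr h2k
        _ = (lam 0 / lam 1) ^ (2 * k) := by
            have e2 : (2 : ℝ) * k = ((2 * k : ℕ) : ℝ) := by push_cast; ring
            rw [e2, ← Real.log_pow, Real.exp_log (by positivity)]
    have hpow : (lam 0 / lam 1) ^ (2 * k) = (lam 0 ^ k) ^ 2 / (lam 1 ^ k) ^ 2 := by
      rw [div_pow, ← pow_mul, ← pow_mul]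
      ring_nf
    rw [hpow] at hexp
    have hl1k : 0 < (lam 1 ^ k) ^ 2 := by positivity
    rw [div_le_div_iff₀ (by positivity) hl1k] at hexp
    have := hexp
    ring_nf at this ⊢
    linarith
  have hkey : S - (inner ℝ (v 0) T : ℝ) ^ 2 ≤ ε ^ 2 * S := by
    have hi0 : (inner ℝ (v 0) T : ℝ) ^ 2 = (lam 0 ^ k * c) ^ 2 := by
      rw [hinner 0, ← hc]
    rw [hi0]
    calc S - (lam 0 ^ k * c) ^ 2 ≤ (lam 1 ^ k) ^ 2 * (1 - c ^ 2) := htail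
      _ ≤ ε ^ 2 * (c ^ 2 * (lam 0 ^ k) ^ 2) := by linarith [hgeom]
      _ = ε ^ 2 * (lam 0 ^ k * c) ^ 2 := by ring
      _ ≤ ε ^ 2 * S := by nlinarith [hSP, sq_nonneg ε]
  rw [hnormT]
  calc 1 - (inner ℝ (v 0) T : ℝ) ^ 2 / S
      = (S - (inner ℝ (v 0) T : ℝ) ^ 2) / S := by field_simp
    _ ≤ (ε ^ 2 * S) / S := by gcongr
    _ = ε ^ 2 := by field_simp
end

section
/- Let n ≥ 1 and a ≥ 0 be integers, let A be an n×n complex matrix, and let U be a unitary matrix of size (2^a·n)×(2^a·n) whose top-left n×n block equals A, i.e. U_{(0,j),(0,k)} = A_{jk} under the identification of indices with pairs in {0,...,2^a−1}×{0,...,n−1}. Then for every real number p > 1 there exists a unitary matrix U' of size (2^{a+1}·n)×(2^{a+1}·n) whose top-left n×n block equals (1/p)·A. -/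
open Matrix Kronecker

/-- a block encoding of `A` can be rescaled into a block encoding
of `(1/p)·A` for any `p > 1`, using one extra ancilla qubit. -/
theorem block_encoding_scaling
    (n a : ℕ) (hn : 1 ≤ n)
    (A : Matrix (Fin n) (Fin n) ℂ)
    (U : Matrix (Fin (2 ^ a) × Fin n) (Fin (2 ^ a) × Fin n) ℂ)
    (hU : U ∈ Matrix.unitaryGroup (Fin (2 ^ a) × Fin n) ℂ)
    (hblock : ∀ j k : Fin n,
      U ((⟨0, Nat.two_pow_pos a⟩ : Fin (2 ^ a)), j)
        ((⟨0, Nat.two_pow_pos a⟩ : Fin (2 ^ a)), k) = A j k)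
    (p : ℝ) (hp : 1 < p) :
    ∃ U' : Matrix (Fin (2 ^ (a + 1)) × Fin n) (Fin (2 ^ (a + 1)) × Fin n) ℂ,
      U' ∈ Matrix.unitaryGroup (Fin (2 ^ (a + 1)) × Fin n) ℂ ∧
      ∀ j k : Fin n,
        U' ((⟨0, Nat.two_pow_pos (a + 1)⟩ : Fin (2 ^ (a + 1))), j)
          ((⟨0, Nat.two_pow_pos (a + 1)⟩ : Fin (2 ^ (a + 1))), k)
          = (1 / (p : ℂ)) * A j k := by
  have hp0 : (0 : ℝ) < p := lt_trans one_pos hp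
  set c : ℝ := 1 / p with hc
  set s : ℝ := Real.sqrt (1 - c ^ 2) with hs
  have hc1 : c ≤ 1 := by
    rw [hc, div_le_one hp0]; linarith
  have hc0 : 0 < c := by positivity
  have hs2 : s ^ 2 = 1 - c ^ 2 := by
    rw [hs, Real.sq_sqrt]; nlinarith
  -- the rotation matrix on the ancilla qubit
  set V : Matrix (Fin 2) (Fin 2) ℂ := !![(c : ℂ), -(s : ℂ); (s : ℂ), (c : ℂ)] with hV
  have hkey : (p⁻¹ : ℝ) ^ 2 + s ^ 2 = 1 := by
    rw [hs2, hc]; field_simp; ring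
  have hVU : V * Vᴴ = 1 := by
    ext i j
    fin_cases i <;> fin_cases j <;>
      simp [hV, Matrix.mul_apply, Fin.sum_univ_two, Matrix.conjTranspose_apply,
        Matrix.one_apply, ← Complex.ofReal_pow, ← Complex.ofReal_mul,
        ← Complex.ofReal_add, ← Complex.ofReal_neg] <;>
      push_cast <;> ring_nf <;> linarith [hkey]
  -- the controlled-U matrix (control on the ancilla, which is the *second* factor here)
  set d : Fin 2 → Matrix (Fin (2 ^ a) × Fin n) (Fin (2 ^ a) × Fin n) ℂ :=
    fun b => if b = 0 then U else 1 with hd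
  have hdU : ∀ b, d b * (d b)ᴴ = 1 := by
    intro b
    rw [hd]
    by_cases hb : b = 0
    · simp only [hb, if_pos rfl]
      exact (Matrix.mem_unitaryGroup_iff.mp hU)
    · simp [hb]
  set D : Matrix ((Fin (2 ^ a) × Fin n) × Fin 2) ((Fin (2 ^ a) × Fin n) × Fin 2) ℂ :=
    Matrix.blockDiagonal d with hD
  have hDU : D * Dᴴ = 1 := by
    rw [hD, Matrix.blockDiagonal_conjTranspose, ← Matrix.blockDiagonal_mul]
    rw [show (fun k => d k * (d k)ᴴ) = fun _ => (1 : Matrix (Fin (2 ^ a) × Fin n) (Fin (2 ^ a) × Fin n) ℂ) from funext hdU]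
    exact Matrix.blockDiagonal_one
  -- rotation tensored with identity
  set K : Matrix ((Fin (2 ^ a) × Fin n) × Fin 2) ((Fin (2 ^ a) × Fin n) × Fin 2) ℂ :=
    (1 : Matrix (Fin (2 ^ a) × Fin n) (Fin (2 ^ a) × Fin n) ℂ) ⊗ₖ V with hK
  have hKH : Kᴴ = (1 : Matrix (Fin (2 ^ a) × Fin n) (Fin (2 ^ a) × Fin n) ℂ) ⊗ₖ Vᴴ := by
    ext ⟨x, b⟩ ⟨y, b'⟩
    simp [hK, Matrix.conjTranspose_apply, Matrix.kroneckerMap_apply, Matrix.one_apply,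
      apply_ite (star : ℂ → ℂ), eq_comm]
  have hKU : K * Kᴴ = 1 := by
    rw [hKH, hK, ← Matrix.mul_kronecker_mul, Matrix.mul_one, hVU, Matrix.one_kronecker_one]
  set M := K * D with hM
  have hMU : M * Mᴴ = 1 := by
    rw [hM, Matrix.conjTranspose_mul, Matrix.mul_assoc, ← Matrix.mul_assoc D, hDU,
      Matrix.one_mul, hKU]
  -- the reindexing equivalence
  set f : Fin (2 ^ a) × Fin 2 ≃ Fin (2 ^ (a + 1)) :=
    finProdFinEquiv.trans (finCongr (by rw [pow_succ])) with hf
  set e : ((Fin (2 ^ a) × Fin n) × Fin 2) ≃ (Fin (2 ^ (a + 1)) × Fin n) :=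
    ((Equiv.prodAssoc _ _ _).trans ((Equiv.refl _).prodCongr (Equiv.prodComm _ _))).trans
      (((Equiv.prodAssoc _ _ _).symm).trans (f.prodCongr (Equiv.refl _))) with he
  have he_app : ∀ (x : Fin (2 ^ a)) (j : Fin n) (b : Fin 2),
      e ((x, j), b) = (f (x, b), j) := by
    intro x j b
    simp [he]
  refine ⟨(Matrix.reindex e e) M, ?_, ?_⟩
  · rw [Matrix.mem_unitaryGroup_iff]
    have : star ((Matrix.reindex e e) M) = (Matrix.reindex e e) Mᴴ := by
      rw [Matrix.star_eq_conjTranspose, Matrix.conjTranspose_reindex]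
    rw [this]
    simp only [Matrix.reindex_apply]
    rw [Matrix.submatrix_mul_equiv, hMU, Matrix.submatrix_one_equiv]
  · intro j k
    have hf0 : f (⟨0, Nat.two_pow_pos a⟩, 0) = ⟨0, Nat.two_pow_pos (a + 1)⟩ := by
      rw [hf]
      apply Fin.ext
      simp [finProdFinEquiv]
    have hsymm : ∀ j : Fin n,
        e.symm (⟨0, Nat.two_pow_pos (a + 1)⟩, j) = ((⟨0, Nat.two_pow_pos a⟩, j), 0) := by
      intro j'
      rw [Equiv.symm_apply_eq, he_app, hf0]
    rw [Matrix.reindex_apply, Matrix.submatrix_apply, hsymm, hsymm, hM]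
    rw [Matrix.mul_apply, Fintype.sum_prod_type]
    have hKval : ∀ (z : Fin (2 ^ a) × Fin n) (b : Fin 2),
        K ((⟨0, Nat.two_pow_pos a⟩, j), 0) (z, b)
          = (if (⟨0, Nat.two_pow_pos a⟩, j) = z then 1 else 0) * V 0 b := by
      intro z b
      by_cases h : ((⟨0, Nat.two_pow_pos a⟩ : Fin (2 ^ a)), j) = z
      · rw [if_pos h, one_mul]
        simp only [hK, Matrix.kroneckerMap_apply, Matrix.one_apply, if_pos h, one_mul]
      · rw [if_neg h, zero_mul]
        simp only [hK, Matrix.kroneckerMap_apply, Matrix.one_apply, if_neg h, zero_mul]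
    have hDval : ∀ (z : Fin (2 ^ a) × Fin n) (b : Fin 2),
        D (z, b) ((⟨0, Nat.two_pow_pos a⟩, k), 0)
          = if b = 0 then U z (⟨0, Nat.two_pow_pos a⟩, k) else 0 := by
      intro z b
      rw [hD]
      by_cases hb : b = 0
      · subst hb; simp [Matrix.blockDiagonal_apply, hd]
      · simp [Matrix.blockDiagonal_apply, hb]
    simp_rw [hKval, hDval]
    have hV00 : V 0 0 = (c : ℂ) := by simp [hV]
    simp [Fin.sum_univ_two, mul_ite, ite_mul, mul_zero, zero_mul,
      Finset.sum_ite_eq, hV00, hblock j k, hc]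
    rw [Finset.sum_eq_single ((⟨0, Nat.two_pow_pos a⟩ : Fin (2 ^ a)), j)]
    · show (if ((⟨0, Nat.two_pow_pos a⟩ : Fin (2 ^ a)), j) = ((⟨0, Nat.two_pow_pos a⟩ : Fin (2 ^ a)), j)
          then (1 : ℂ) else 0) * ((p : ℂ))⁻¹ * U (⟨0, Nat.two_pow_pos a⟩, j) (⟨0, Nat.two_pow_pos a⟩, k)
          = ((p : ℂ))⁻¹ * A j k
      rw [if_pos rfl, one_mul, hblock j k]
    · intro x _ hx
      show (if ((⟨0, Nat.two_pow_pos a⟩ : Fin (2 ^ a)), j) = x then (1 : ℂ) else 0) * ((p : ℂ))⁻¹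
          * U x (⟨0, Nat.two_pow_pos a⟩, k) = 0
      rw [if_neg (fun h => hx h.symm), zero_mul, zero_mul]
    · intro h
      exact absurd (Finset.mem_univ _) h
end
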